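/- (aMALA acceptance ratio factorisation.) Fix δ > 0, x⁰, x¹, u, g⁰, g¹ ∈ ℝ^D and set x̄ := (x⁰ + x¹)/2. Then the ratio [N(u; x¹ + (δ/2)g¹, (δ/2)I) · N(x⁰; u, (δ/2)I)] / [N(u; x⁰ + (δ/2)g⁰, (δ/2)I) · N(x¹; u, (δ/2)I)] equals [N(x⁰; x¹ + (δ/2)g¹, δI) / N(x¹; x⁰ + (δ/2)g⁰, δI)] · [N(u; x̄ + (δ/4)g¹, (δ/4)I) / N(u; x̄ + (δ/4)g⁰, (δ/4)I)]. -/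

import Mathlib

open Matrix

/-- Multivariate Gaussian density with mean `m` and covariance `C`. -/
noncomputable def gauss {n : Type*} [Fintype n] [DecidableEq n] (m : n → ℝ)
    (C : Matrix n n ℝ) (x : n → ℝ) : ℝ :=
  (2 * Real.pi) ^ (-(Fintype.card n : ℝ) / 2) * C.det ^ (-(1 : ℝ) / 2) *
    Real.exp (-(1 / 2) * ((x - m) ⬝ᵥ (C⁻¹ *ᵥ (x - m))))

lemma gauss_smul_one {D : ℕ} (c : ℝ) (hc : c ≠ 0) (m x : Fin D → ℝ) :
    gauss m (c • (1 : Matrix (Fin D) (Fin D) ℝ)) x =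
    (2 * Real.pi) ^ (-(D : ℝ) / 2) * (c ^ D) ^ (-(1 : ℝ) / 2) *
      Real.exp (-(2 * c)⁻¹ * ((x - m) ⬝ᵥ (x - m))) := by
  have hdet : (c • (1 : Matrix (Fin D) (Fin D) ℝ)).det = c ^ D := by
    simp [Matrix.det_smul]
  have hinv : (c • (1 : Matrix (Fin D) (Fin D) ℝ))⁻¹ = c⁻¹ • 1 := by
    apply Matrix.inv_eq_right_inv
    rw [Matrix.smul_mul, Matrix.mul_smul, Matrix.one_mul, smul_smul,
      mul_inv_cancel₀ hc, one_smul]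
  unfold gauss
  rw [hdet, hinv, Matrix.smul_mulVec, Matrix.one_mulVec, dotProduct_smul,
    smul_eq_mul, Fintype.card_fin]
  congr 2
  field_simp

lemma ratio4 (A : ℝ) (hA : A ≠ 0) (t1 t2 t3 t4 : ℝ) :
    (A * Real.exp t1 * (A * Real.exp t2)) / (A * Real.exp t3 * (A * Real.exp t4))
      = Real.exp (t1 + t2 - (t3 + t4)) := by
  rw [Real.exp_sub, Real.exp_add, Real.exp_add]
  have h3 := Real.exp_ne_zero t3
  have h4 := Real.exp_ne_zero t4
  field_simp

lemma ratio2 (A : ℝ) (hA : A ≠ 0) (t1 t2 : ℝ) :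
    (A * Real.exp t1) / (A * Real.exp t2) = Real.exp (t1 - t2) := by
  rw [Real.exp_sub]
  have h2 := Real.exp_ne_zero t2
  field_simp

/-- aMALA acceptance-ratio factorisation: with `x̄ = (x⁰+x¹)/2`,
`[N(u; x¹+(δ/2)g¹, (δ/2)I)·N(x⁰; u, (δ/2)I)] / [N(u; x⁰+(δ/2)g⁰, (δ/2)I)·N(x¹; u, (δ/2)I)]`
equals
`[N(x⁰; x¹+(δ/2)g¹, δI)/N(x¹; x⁰+(δ/2)g⁰, δI)] · [N(u; x̄+(δ/4)g¹, (δ/4)I)/N(u; x̄+(δ/4)g⁰, (δ/4)I)]`. -/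
theorem amala_acceptance_ratio_factorisation (D : ℕ) (δ : ℝ) (hδ : 0 < δ)
    (x₀ x₁ u g₀ g₁ : Fin D → ℝ) :
    (gauss (x₁ + (δ / 2) • g₁) ((δ / 2) • (1 : Matrix (Fin D) (Fin D) ℝ)) u *
        gauss u ((δ / 2) • 1) x₀) /
      (gauss (x₀ + (δ / 2) • g₀) ((δ / 2) • 1) u * gauss u ((δ / 2) • 1) x₁)
    = (gauss (x₁ + (δ / 2) • g₁) (δ • 1) x₀ /
        gauss (x₀ + (δ / 2) • g₀) (δ • 1) x₁) *
      (gauss ((x₀ + x₁) / 2 + (δ / 4) • g₁) ((δ / 4) • 1) u /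
        gauss ((x₀ + x₁) / 2 + (δ / 4) • g₀) ((δ / 4) • 1) u) := by
  have hδ' : δ ≠ 0 := ne_of_gt hδ
  have h2 : (δ / 2) ≠ 0 := by positivity
  have h4 : (δ / 4) ≠ 0 := by positivity
  rw [gauss_smul_one _ h2, gauss_smul_one _ h2, gauss_smul_one _ h2,
    gauss_smul_one _ h2, gauss_smul_one _ hδ', gauss_smul_one _ hδ',
    gauss_smul_one _ h4, gauss_smul_one _ h4]
  have hP : (0:ℝ) < (2 * Real.pi) ^ (-(D : ℝ) / 2) := by positivity
  have hA2 : (2 * Real.pi) ^ (-(D : ℝ) / 2) * ((δ / 2) ^ D) ^ (-(1:ℝ) / 2) ≠ 0 := by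
    positivity
  have hA1 : (2 * Real.pi) ^ (-(D : ℝ) / 2) * (δ ^ D) ^ (-(1:ℝ) / 2) ≠ 0 := by
    positivity
  have hA4 : (2 * Real.pi) ^ (-(D : ℝ) / 2) * ((δ / 4) ^ D) ^ (-(1:ℝ) / 2) ≠ 0 := by
    positivity
  rw [ratio4 _ hA2, ratio2 _ hA1, ratio2 _ hA4, ← Real.exp_add]
  congr 1
  simp only [dotProduct, Pi.sub_apply, Pi.add_apply, Pi.smul_apply, Pi.div_apply, Pi.ofNat_apply,
    smul_eq_mul, Finset.mul_sum, ← Finset.sum_add_distrib, ← Finset.sum_sub_distrib]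
  apply Finset.sum_congr rfl
  intro i _
  field_simp
  ring
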